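/- arXiv:1611.01115 — 2 statements merged into one kernel-verified Lean document; each statement's English description precedes it below -/
import Mathlib

section
/- For every n ≥ 1, the number of taxi walks satisfies c_n ≤ 2·f_{n+1}, where (f_k) is the Fibonacci sequence defined by f_0 = 0, f_1 = 1, and f_k = f_{k−1} + f_{k−2} for k ≥ 2. -/
open Filter

/-- The oriented step relation of the Manhattan lattice. -/
def taxiStep (u v : ℤ × ℤ) : Prop :=
  (Even u.2 ∧ v = (u.1 + 1, u.2)) ∨
  (Odd u.2 ∧ v = (u.1 - 1, u.2)) ∨
  (Even u.1 ∧ v = (u.1, u.2 + 1)) ∨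
  (Odd u.1 ∧ v = (u.1, u.2 - 1))

/-- Perpendicularity of two step vectors. -/
def perp (d e : ℤ × ℤ) : Prop := d.1 * e.1 + d.2 * e.2 = 0

instance (d e : ℤ × ℤ) : Decidable (perp d e) := by unfold perp; infer_instance

/-- The walk `l` turns at its `i`-th vertex (meaningful for `1 ≤ i ≤ l.length - 2`). -/
def turnAt (l : List (ℤ × ℤ)) (i : ℕ) : Prop :=
  perp (l.getD i 0 - l.getD (i - 1) 0) (l.getD (i + 1) 0 - l.getD i 0)

instance (l : List (ℤ × ℤ)) (i : ℕ) : Decidable (turnAt l i) := by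
  unfold turnAt; infer_instance

/-- A taxi walk, recorded as its list of vertices (a walk of length `n` has `n + 1` vertices). -/
def IsTaxiWalk (l : List (ℤ × ℤ)) : Prop :=
  l ≠ [] ∧ l.Nodup ∧
  (∀ i, i + 1 < l.length → taxiStep (l.getD i 0) (l.getD (i + 1) 0)) ∧
  (∀ i, 1 ≤ i → i + 2 < l.length → ¬(turnAt l i ∧ turnAt l (i + 1)))

/-- The set of taxi walks of length `n` starting at the origin. -/
def originWalks (n : ℕ) : Set (List (ℤ × ℤ)) :=
  {l | IsTaxiWalk l ∧ l.length = n + 1 ∧ l.getD 0 0 = 0}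

/-- `taxiCount n` is `c_n`, the number of taxi walks of length `n` starting at the origin. -/
noncomputable def taxiCount (n : ℕ) : ℕ := (originWalks n).ncard

/-- The turn-word of a walk: `true` (the letter `t`) where the walk turns,
`false` (the letter `s`) where it goes straight. -/
def turnWord (l : List (ℤ × ℤ)) : List Bool :=
  (List.range (l.length - 2)).map fun i => decide (turnAt l (i + 1))

/-- The encoding of a taxi walk starting at the origin: the first coordinate is `true`
(for `N`) if `v₁ = (0,1)` and `false` (for `E`) if `v₁ = (1,0)`; the second is the turn-word. -/
def encode (l : List (ℤ × ℤ)) : Bool × List Bool :=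
  (decide (l.getD 1 0 = (0, 1)), turnWord l)

/-- A bridge: a taxi walk from `(0,0)` to `(1,0)` staying at abscissa `≥ 1` after the start,
whose last step is horizontal and ends at maximal abscissa. -/
def IsBridge (l : List (ℤ × ℤ)) : Prop :=
  IsTaxiWalk l ∧ 2 ≤ l.length ∧ l.getD 0 0 = (0, 0) ∧ l.getD 1 0 = (1, 0) ∧
  (∀ i, 1 ≤ i → i < l.length → 1 ≤ (l.getD i 0).1) ∧
  (l.getD (l.length - 1) 0).2 = (l.getD (l.length - 2) 0).2 ∧
  (∀ i, i < l.length → (l.getD i 0).1 ≤ (l.getD (l.length - 1) 0).1)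

/-- `bridgeCount n` is `b_n`, the number of bridges of length `n`, with `b_0 = 1`. -/
noncomputable def bridgeCount : ℕ → ℕ
  | 0 => 1
  | n + 1 => {l : List (ℤ × ℤ) | IsBridge l ∧ l.length = n + 2}.ncard

/-- The normalizing symmetry `f_{(x,y)}` of the oriented Manhattan lattice. -/
def normMap (p : ℤ × ℤ) (q : ℤ × ℤ) : ℤ × ℤ :=
  if Even p.1 then
    (if Even p.2 then (q.1 - p.1, q.2 - p.2) else (-(q.1 - p.1), q.2 - p.2))
  else
    (if Even p.2 then (q.1 - p.1, -(q.2 - p.2)) else (-(q.1 - p.1), -(q.2 - p.2)))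

/-- The vertex `v_i` is a cutvertex of the bridge `l`. -/
def IsCutAt (l : List (ℤ × ℤ)) (i : ℕ) : Prop :=
  0 < i ∧ i + 1 < l.length ∧
  IsBridge (l.take (i + 1)) ∧
  l.getD (i + 1) 0 = l.getD i 0 + (1, 0) ∧
  IsBridge ((l.drop i).map (normMap (l.getD i 0)))

/-- An irreducible bridge: a bridge with no cutvertex. -/
def IsIrreducibleBridge (l : List (ℤ × ℤ)) : Prop :=
  IsBridge l ∧ ∀ i, ¬ IsCutAt l i

/-- `irrBridgeCount n` is `a_n`, the number of irreducible bridges of length `n`, with `a_0 = 0`. -/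
noncomputable def irrBridgeCount : ℕ → ℕ
  | 0 => 0
  | n + 1 => {l : List (ℤ × ℤ) | IsIrreducibleBridge l ∧ l.length = n + 2}.ncard


section Aux

lemma step_diff {u v : ℤ × ℤ} (h : taxiStep u v) :
    v - u = (1,0) ∨ v - u = (-1,0) ∨ v - u = (0,1) ∨ v - u = (0,-1) := by
  rcases h with ⟨_,h⟩|⟨_,h⟩|⟨_,h⟩|⟨_,h⟩ <;> subst h <;>
    simp [Prod.ext_iff, Prod.sub_def]

lemma taxiStep_unique {u v w : ℤ × ℤ} (hv : taxiStep u v) (hw : taxiStep u w)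
    (h : v.2 = u.2 ↔ w.2 = u.2) : v = w := by
  rcases hv with ⟨pv,hv⟩|⟨pv,hv⟩|⟨pv,hv⟩|⟨pv,hv⟩ <;>
  rcases hw with ⟨pw,hw⟩|⟨pw,hw⟩|⟨pw,hw⟩|⟨pw,hw⟩ <;> subst hv <;> subst hw <;>
    simp_all [Prod.ext_iff, Int.even_iff, Int.odd_iff] <;> omega

lemma perp_key {d e : ℤ × ℤ}
    (hd : d = (1,0) ∨ d = (-1,0) ∨ d = (0,1) ∨ d = (0,-1))
    (he : e = (1,0) ∨ e = (-1,0) ∨ e = (0,1) ∨ e = (0,-1)) :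
    perp d e ↔ (d.2 = 0 ↔ e.2 ≠ 0) := by
  rcases hd with rfl|rfl|rfl|rfl <;> rcases he with rfl|rfl|rfl|rfl <;> simp [perp]

lemma turn_iff {u v w : ℤ × ℤ} (hv : taxiStep u v) (hw : taxiStep v w) :
    perp (v - u) (w - v) ↔ ((v - u).2 = 0 ↔ (w - v).2 ≠ 0) :=
  perp_key (step_diff hv) (step_diff hw)

lemma next_unique {u v w w' : ℤ × ℤ} (huv : taxiStep u v) (hw : taxiStep v w)
    (hw' : taxiStep v w') (h : perp (v - u) (w - v) ↔ perp (v - u) (w' - v)) : w = w' := by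
  rw [turn_iff huv hw, turn_iff huv hw'] at h
  have hb : (w - v).2 ≠ 0 ↔ (w' - v).2 ≠ 0 := by tauto
  have h2 : (w - v).2 = w.2 - v.2 := rfl
  have h3 : (w' - v).2 = w'.2 - v.2 := rfl
  rw [h2, h3, sub_ne_zero, sub_ne_zero] at hb
  exact taxiStep_unique hw hw' (not_iff_not.mp hb)

/-- The finset of "good words": words with no two consecutive `true`s. -/
def gw : ℕ → Finset (List Bool)
  | 0 => {[]}
  | 1 => {[false], [true]}
  | (m+2) => ((gw (m+1)).image (List.cons false)) ∪ ((gw m).image (fun w => true :: false :: w))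

lemma gw_card : ∀ m, (gw m).card = Nat.fib (m + 2) := by
  intro m
  induction m using Nat.twoStepInduction with
  | zero => rfl
  | one => rfl
  | more m ih1 ih2 =>
    have hdisj : Disjoint ((gw (m+1)).image (List.cons false))
        ((gw m).image (fun w => true :: false :: w)) := by
      rw [Finset.disjoint_left]
      rintro a ha hb
      simp only [Finset.mem_image] at ha hb
      obtain ⟨w, _, rfl⟩ := ha
      obtain ⟨w', _, h⟩ := hb
      simp at h
    have h1 : ((gw (m+1)).image (List.cons false)).card = (gw (m+1)).card :=
      Finset.card_image_of_injective _ (fun a b h => by simpa using h)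
    have h2 : ((gw m).image (fun w => true :: false :: w)).card = (gw m).card :=
      Finset.card_image_of_injective _ (fun a b h => by simpa using h)
    show (((gw (m+1)).image (List.cons false)) ∪ ((gw m).image (fun w => true :: false :: w))).card = _
    rw [Finset.card_union_of_disjoint hdisj, h1, h2, ih1, ih2]
    have hf := Nat.fib_add_two (n := m+2)
    simp only [show m+2+2 = m+4 from rfl, show m+2+1 = m+3 from rfl,
      show m+1+2 = m+3 from rfl] at *
    omega

lemma mem_gw : ∀ (m : ℕ) (w : List Bool), w.length = m →
    w.Chain' (fun a b => a = false ∨ b = false) → w ∈ gw m := by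
  intro m
  induction m using Nat.twoStepInduction with
  | zero => intro w hw _; rw [List.length_eq_zero_iff] at hw; subst hw; simp [gw]
  | one =>
    intro w hw _
    rcases w with _|⟨b, _|⟨c,t⟩⟩ <;> simp_all [gw]
  | more m ih1 ih2 =>
    intro w hw hc
    rcases w with _|⟨a, w⟩; · simp at hw
    rcases w with _|⟨b, w⟩; · simp at hw
    simp only [List.length_cons] at hw
    have hw2 : w.length = m := by omega
    cases a
    · apply Finset.mem_union_left
      exact Finset.mem_image_of_mem _ (ih2 (b :: w) (by simp [hw2]) hc.tail)
    · have hb : b = false := by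
        have := List.isChain_cons_cons.mp hc
        rcases this.1 with h | h
        · exact absurd h (by simp)
        · exact h
      subst hb
      apply Finset.mem_union_right
      exact Finset.mem_image_of_mem _ (ih1 w hw2 hc.tail.tail)

lemma getD_map_range {α : Type*} (f : ℕ → α) (m j : ℕ) (h : j < m) (d : α) :
    ((List.range m).map f).getD j d = f j := by
  rw [List.getD_eq_getElem _ _ (by simpa using h)]
  simp

lemma walk_eq_of_encode_eq {n : ℕ} (hn : 1 ≤ n) {l l' : List (ℤ × ℤ)}
    (hl : l ∈ originWalks n) (hl' : l' ∈ originWalks n) (h : encode l = encode l') :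
    l = l' := by
  obtain ⟨⟨hne, hnd, hstep, hturn⟩, hlen, h0⟩ := hl
  obtain ⟨⟨hne', hnd', hstep', hturn'⟩, hlen', h0'⟩ := hl'
  have h1 : decide (l.getD 1 0 = ((0:ℤ),(1:ℤ))) = decide (l'.getD 1 0 = ((0:ℤ),(1:ℤ))) :=
    congrArg Prod.fst h
  have h2 : turnWord l = turnWord l' := congrArg Prod.snd h
  have hTW : ∀ j, j < n - 1 → (turnAt l (j+1) ↔ turnAt l' (j+1)) := by
    intro j hj
    have hgd := congrArg (fun w => w.getD j false) h2
    have e1 : (turnWord l).getD j false = decide (turnAt l (j+1)) := by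
      rw [turnWord, hlen]; exact getD_map_range _ _ _ (by omega) _
    have e2 : (turnWord l').getD j false = decide (turnAt l' (j+1)) := by
      rw [turnWord, hlen']; exact getD_map_range _ _ _ (by omega) _
    simp only [e1, e2, decide_eq_decide] at hgd
    exact hgd
  have key : ∀ i, i ≤ n → l.getD i 0 = l'.getD i 0 := by
    intro i
    induction i using Nat.twoStepInduction with
    | zero => intro _; rw [h0, h0']
    | one =>
      intro _
      have s0 := hstep 0 (by omega)
      have s0' := hstep' 0 (by omega)
      rw [h0] at s0
      rw [h0'] at s0'
      have c : l.getD 1 0 = ((1:ℤ),(0:ℤ)) ∨ l.getD 1 0 = ((0:ℤ),(1:ℤ)) := by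
        rcases s0 with ⟨_,hh⟩|⟨hh,_⟩|⟨_,hh⟩|⟨hh,_⟩
        · left; simpa using hh
        · exact absurd hh (by simp [Int.odd_iff])
        · right; simpa using hh
        · exact absurd hh (by simp [Int.odd_iff])
      have c' : l'.getD 1 0 = ((1:ℤ),(0:ℤ)) ∨ l'.getD 1 0 = ((0:ℤ),(1:ℤ)) := by
        rcases s0' with ⟨_,hh⟩|⟨hh,_⟩|⟨_,hh⟩|⟨hh,_⟩
        · left; simpa using hh
        · exact absurd hh (by simp [Int.odd_iff])
        · right; simpa using hh
        · exact absurd hh (by simp [Int.odd_iff])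
      have hiff : (l.getD 1 0 = ((0:ℤ),(1:ℤ))) ↔ (l'.getD 1 0 = ((0:ℤ),(1:ℤ))) := by
        simpa [decide_eq_decide] using h1
      rcases c with hc | hc <;> rcases c' with hc' | hc' <;>
        simp_all [Prod.ext_iff]
    | more i ih1 ih2 =>
      intro hi
      have e0 : l.getD i 0 = l'.getD i 0 := ih1 (by omega)
      have e1 : l.getD (i+1) 0 = l'.getD (i+1) 0 := ih2 (by omega)
      have s1 := hstep i (by omega)
      have s2 := hstep (i+1) (by omega)
      have s2' := hstep' (i+1) (by omega)
      rw [← e1] at s2'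
      have ht := hTW i (by omega)
      unfold turnAt at ht
      simp only [Nat.add_sub_cancel] at ht
      rw [← e0, ← e1] at ht
      exact next_unique s1 s2 s2' ht
  apply List.ext_getElem (by rw [hlen, hlen'])
  intro i hi1 hi2
  have hi' : i ≤ n := by rw [hlen] at hi1; omega
  have := key i hi'
  rwa [List.getD_eq_getElem _ _ hi1, List.getD_eq_getElem _ _ hi2] at this

lemma turnWord_mem_gw {n : ℕ} (hn : 1 ≤ n) {l : List (ℤ × ℤ)}
    (hl : l ∈ originWalks n) : turnWord l ∈ gw (n - 1) := by
  obtain ⟨⟨hne, hnd, hstep, hturn⟩, hlen, h0⟩ := hl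
  apply mem_gw
  · simp only [turnWord, List.length_map, List.length_range, hlen]
    omega
  · rw [turnWord, List.Chain', List.isChain_iff_getElem]
    intro i hi
    simp only [List.length_map, List.length_range, hlen] at hi
    simp only [List.get_eq_getElem, List.getElem_map, List.getElem_range]
    have hnd2 := hturn (i+1) (by omega) (by omega)
    by_cases p1 : turnAt l (i+1) <;> by_cases p2 : turnAt l (i+1+1) <;>
      simp_all

end Aux

/-- For every `n ≥ 1`, the number of taxi walks satisfies
`c_n ≤ 2 · f_{n+1}`, where `f` is the Fibonacci sequence with `f_0 = 0`, `f_1 = 1`. -/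
theorem taxiCount_le_two_mul_fib (n : ℕ) (hn : 1 ≤ n) :
    taxiCount n ≤ 2 * Nat.fib (n + 1) := by
  have hinj : Set.InjOn encode (originWalks n) :=
    fun l hl l' hl' h => walk_eq_of_encode_eq hn hl hl' h
  have hsub : encode '' originWalks n ⊆
      ↑((Finset.univ : Finset Bool) ×ˢ gw (n-1)) := by
    rintro p ⟨l, hl, rfl⟩
    simp only [Finset.coe_product, Set.mem_prod, Finset.mem_coe, Finset.mem_univ, true_and,
      Finset.coe_univ, Set.mem_univ, encode]
    exact turnWord_mem_gw hn hl
  calc taxiCount n = (encode '' originWalks n).ncard :=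
        (Set.ncard_image_of_injOn hinj).symm
    _ ≤ (((Finset.univ : Finset Bool) ×ˢ gw (n-1) : Finset (Bool × List Bool)) :
          Set (Bool × List Bool)).ncard :=
        Set.ncard_le_ncard hsub (Finset.finite_toSet _)
    _ = 2 * Nat.fib (n + 1) := by
        rw [Set.ncard_coe_finset, Finset.card_product, gw_card, Finset.card_univ,
          show n - 1 + 2 = n + 1 by omega]
        simp
end

section
/- The taxi walk connective constant satisfies √2 ≤ μ_taxi ≤ (1+√5)/2. -/
open Filter

section TaxiAux

lemma step_determined {u v w1 w2 : ℤ × ℤ} (huv : taxiStep u v)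
    (h1 : taxiStep v w1) (h2 : taxiStep v w2)
    (hp : perp (v - u) (w1 - v) ↔ perp (v - u) (w2 - v)) : w1 = w2 := by
  rcases huv with ⟨hu, rfl⟩ | ⟨hu, rfl⟩ | ⟨hu, rfl⟩ | ⟨hu, rfl⟩ <;>
  rcases h1 with ⟨hv1, rfl⟩ | ⟨hv1, rfl⟩ | ⟨hv1, rfl⟩ | ⟨hv1, rfl⟩ <;>
  rcases h2 with ⟨hv2, rfl⟩ | ⟨hv2, rfl⟩ | ⟨hv2, rfl⟩ | ⟨hv2, rfl⟩ <;>
  simp_all [perp, Prod.ext_iff, Int.even_iff, Int.odd_iff] <;> omega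

lemma first_step {v : ℤ × ℤ} (h : taxiStep 0 v) : v = (1, 0) ∨ v = (0, 1) := by
  rcases h with ⟨hu, rfl⟩ | ⟨hu, rfl⟩ | ⟨hu, rfl⟩ | ⟨hu, rfl⟩ <;>
    simp_all [Int.even_iff, Int.odd_iff, Prod.ext_iff] <;> omega

lemma turnWord_getD (l : List (ℤ × ℤ)) (j : ℕ) (hj : j < l.length - 2) :
    (turnWord l).getD j false = decide (turnAt l (j + 1)) := by
  have hj' : j < (turnWord l).length := by simp [turnWord]; omega
  rw [List.getD_eq_getElem _ _ hj']
  simp [turnWord]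

lemma encode_injOn (n : ℕ) : Set.InjOn encode (originWalks n) := by
  rintro l1 ⟨⟨-, -, hs1, -⟩, hl1, h01⟩ l2 ⟨⟨-, -, hs2, -⟩, hl2, h02⟩ he
  have hfst : decide (l1.getD 1 0 = ((0 : ℤ), (1 : ℤ))) = decide (l2.getD 1 0 = ((0:ℤ),(1:ℤ))) :=
    congrArg Prod.fst he
  have hsnd : turnWord l1 = turnWord l2 := congrArg Prod.snd he
  have hbit : ∀ j, j + 2 < n + 1 → (turnAt l1 (j + 1) ↔ turnAt l2 (j + 1)) := by
    intro j hj
    have : (turnWord l1).getD j false = (turnWord l2).getD j false := by rw [hsnd]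
    rw [turnWord_getD l1 j (by omega), turnWord_getD l2 j (by omega)] at this
    simpa [decide_eq_decide] using this
  have key : ∀ i, i < n + 1 → l1.getD i 0 = l2.getD i 0 := by
    intro i
    induction i using Nat.strong_induction_on with
    | _ i ih =>
      match i with
      | 0 => intro _; rw [h01, h02]
      | 1 =>
        intro h1
        have t1 := hs1 0 (by omega)
        have t2 := hs2 0 (by omega)
        rw [h01] at t1; rw [h02] at t2
        rcases first_step t1 with e1 | e1 <;> rcases first_step t2 with e2 | e2 <;>
          simp_all
      | (k + 2) =>
        intro hk
        have hu : l1.getD k 0 = l2.getD k 0 := ih k (by omega) (by omega)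
        have hv : l1.getD (k + 1) 0 = l2.getD (k + 1) 0 := ih (k + 1) (by omega) (by omega)
        have s1 := hs1 k (by omega)
        have s1' := hs1 (k + 1) (by omega)
        have s2' := hs2 (k + 1) (by omega)
        rw [hu, hv] at s1
        rw [hv] at s1'
        have hiff := hbit k (by omega)
        unfold turnAt at hiff
        simp only [Nat.add_sub_cancel, hu, hv] at hiff
        exact step_determined s1 s1' s2' hiff
  apply List.ext_getElem (by omega)
  intro i hi1 hi2
  have := key i (by omega)
  rwa [List.getD_eq_getElem _ _ hi1, List.getD_eq_getElem _ _ hi2] at this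

def W (m : ℕ) : Set (List Bool) :=
  {w | w.length = m ∧ w.Chain' fun a b => ¬(a = true ∧ b = true)}

lemma W_finite (m : ℕ) : (W m).Finite :=
  (List.finite_length_eq Bool m).subset fun w hw => hw.1

lemma W_step (m : ℕ) : (W (m + 2)).ncard ≤ (W (m + 1)).ncard + (W m).ncard := by
  have hsub : W (m + 2) ⊆ {w ∈ W (m + 2) | w.getD 0 false = false} ∪
      {w ∈ W (m + 2) | w.getD 0 false = true} := by
    intro w hw; rcases Bool.eq_false_or_eq_true (w.getD 0 false) with h | h
    · exact Or.inr ⟨hw, h⟩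
    · exact Or.inl ⟨hw, h⟩
  have hA : ({w ∈ W (m + 2) | w.getD 0 false = false}).ncard ≤ (W (m + 1)).ncard := by
    refine Set.ncard_le_ncard_of_injOn List.tail ?_ ?_ (W_finite _)
    · rintro w ⟨⟨hlen, hch⟩, hhead⟩
      match w with
      | a :: t => exact ⟨by simpa using hlen, hch.tail⟩
    · rintro w1 ⟨⟨hlen1, -⟩, hh1⟩ w2 ⟨⟨hlen2, -⟩, hh2⟩ ht
      match w1, w2 with
      | a :: t1, b :: t2 =>
        simp only [List.getD_cons_zero] at hh1 hh2
        simp only [List.tail_cons] at ht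
        rw [hh1, hh2, ht]
  have hB : ({w ∈ W (m + 2) | w.getD 0 false = true}).ncard ≤ (W m).ncard := by
    refine Set.ncard_le_ncard_of_injOn (fun w => w.tail.tail) ?_ ?_ (W_finite _)
    · rintro w ⟨⟨hlen, hch⟩, hhead⟩
      match w with
      | a :: b :: t =>
        unfold List.Chain' at hch
        rw [List.isChain_cons_cons] at hch
        exact ⟨by simpa using hlen, hch.2.tail⟩
    · rintro w1 ⟨⟨hlen1, hch1⟩, hh1⟩ w2 ⟨⟨hlen2, hch2⟩, hh2⟩ ht
      match w1, w2 with
      | a :: b :: t1, c :: d :: t2 =>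
        simp only [List.getD_cons_zero] at hh1 hh2
        simp only [List.tail_cons] at ht
        unfold List.Chain' at hch1 hch2
        rw [List.isChain_cons_cons] at hch1 hch2
        have hb : b = false := by
          cases b; rfl; exact absurd ⟨hh1, rfl⟩ hch1.1
        have hd : d = false := by
          cases d; rfl; exact absurd ⟨hh2, rfl⟩ hch2.1
        rw [hh1, hh2, hb, hd, ht]
  calc (W (m + 2)).ncard ≤ _ :=
        Set.ncard_le_ncard hsub (((W_finite _).subset (fun w hw => hw.1)).union
          ((W_finite _).subset fun w hw => hw.1))
    _ ≤ _ + _ := Set.ncard_union_le _ _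
    _ ≤ (W (m + 1)).ncard + (W m).ncard := Nat.add_le_add hA hB

lemma W_le_fib : ∀ m, (W m).ncard ≤ Nat.fib (m + 3) := by
  intro m
  induction m using Nat.strong_induction_on with
  | _ m ih =>
    match m with
    | 0 =>
      have : W 0 ⊆ {[]} := by rintro w ⟨hlen, -⟩; simpa using List.length_eq_zero_iff.mp hlen
      calc (W 0).ncard ≤ ({[]} : Set (List Bool)).ncard :=
            Set.ncard_le_ncard this (Set.finite_singleton _)
        _ ≤ Nat.fib 3 := by rw [Set.ncard_singleton]; decide
    | 1 =>
      have : W 1 ⊆ {[false], [true]} := by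
        rintro w ⟨hlen, -⟩
        rcases List.length_eq_one_iff.mp hlen with ⟨a, rfl⟩
        cases a <;> simp
      calc (W 1).ncard ≤ ({[false], [true]} : Set (List Bool)).ncard :=
            Set.ncard_le_ncard this (by simp)
        _ ≤ 2 := (Set.ncard_insert_le _ _).trans (by simp [Set.ncard_singleton])
        _ ≤ Nat.fib 4 := by simp [Nat.fib]
    | (k + 2) =>
      calc (W (k + 2)).ncard ≤ (W (k + 1)).ncard + (W k).ncard := W_step k
        _ ≤ Nat.fib (k + 4) + Nat.fib (k + 3) := Nat.add_le_add (ih _ (by omega)) (ih _ (by omega))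
        _ = Nat.fib (k + 5) := by rw [Nat.add_comm]; exact (Nat.fib_add_two (n := k + 3)).symm

lemma turnWord_mem {n : ℕ} {l : List (ℤ × ℤ)} (hl : l ∈ originWalks n) :
    turnWord l ∈ W (n - 1) := by
  obtain ⟨⟨-, -, -, h4⟩, hlen, -⟩ := hl
  refine ⟨by simp [turnWord]; omega, ?_⟩
  unfold List.Chain'
  rw [List.isChain_iff_getElem]
  intro i hi
  simp only [turnWord, List.length_map, List.length_range] at hi
  simp only [turnWord, List.get_eq_getElem, List.getElem_map, List.getElem_range,
    decide_eq_true_eq]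
  rintro ⟨ht1, ht2⟩
  exact h4 (i + 1) (by omega) (by omega) ⟨ht1, by simpa [Nat.add_assoc] using ht2⟩

lemma originWalks_finite (n : ℕ) : (originWalks n).Finite := by
  refine Set.Finite.of_finite_image ?_ (encode_injOn n)
  refine Set.Finite.subset ((Set.finite_univ (α := Bool)).prod (W_finite (n - 1))) ?_
  rintro _ ⟨l, hl, rfl⟩
  exact ⟨trivial, turnWord_mem hl⟩

lemma taxiCount_le (n : ℕ) (hn : 1 ≤ n) : taxiCount n ≤ 2 * Nat.fib (n + 2) := by
  have hinj1 : Function.Injective (fun w : List Bool => ((true : Bool), w)) := by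
    intro a b h; simpa using h
  have hinj2 : Function.Injective (fun w : List Bool => ((false : Bool), w)) := by
    intro a b h; simpa using h
  have himg : encode '' originWalks n ⊆
      (fun w => ((true : Bool), w)) '' W (n - 1) ∪ (fun w => ((false : Bool), w)) '' W (n - 1) := by
    rintro _ ⟨l, hl, rfl⟩
    have hw := turnWord_mem hl
    rcases Bool.eq_false_or_eq_true (decide (l.getD 1 0 = ((0 : ℤ), (1 : ℤ)))) with h | h
    · exact Or.inl ⟨turnWord l, hw, by simp only [encode]; rw [h]⟩
    · exact Or.inr ⟨turnWord l, hw, by simp only [encode]; rw [h]⟩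
  have heq : n - 1 + 3 = n + 2 := by omega
  calc taxiCount n = (encode '' originWalks n).ncard :=
        (Set.ncard_image_of_injOn (encode_injOn n)).symm
    _ ≤ _ := Set.ncard_le_ncard himg (((W_finite _).image _).union ((W_finite _).image _))
    _ ≤ _ + _ := Set.ncard_union_le _ _
    _ = (W (n - 1)).ncard + (W (n - 1)).ncard := by
        rw [Set.ncard_image_of_injective _ hinj1, Set.ncard_image_of_injective _ hinj2]
    _ ≤ 2 * Nat.fib (n + 2) := by
        have := W_le_fib (n - 1); rw [heq] at this; omega

def dvec (b : Bool) : ℤ × ℤ := if b then (0, 1) else (1, 0)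

def stair : List Bool → ℤ × ℤ → List (ℤ × ℤ)
  | [], p => [p]
  | b :: bs, p => p :: (p + dvec b) :: stair bs (p + dvec b + dvec b)

lemma stair_length (bs : List Bool) (p : ℤ × ℤ) :
    (stair bs p).length = 2 * bs.length + 1 := by
  induction bs generalizing p with
  | nil => rfl
  | cons b bs ih => simp [stair, ih]; omega

lemma stair_getD_zero (bs : List Bool) (p : ℤ × ℤ) : (stair bs p).getD 0 0 = p := by
  cases bs <;> rfl

lemma stair_getD_succ_succ (b : Bool) (bs : List Bool) (p : ℤ × ℤ) (i : ℕ) :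
    (stair (b :: bs) p).getD (i + 2) 0 = (stair bs (p + dvec b + dvec b)).getD i 0 := rfl

lemma stair_getD_one (b : Bool) (bs : List Bool) (p : ℤ × ℤ) :
    (stair (b :: bs) p).getD 1 0 = p + dvec b := rfl

lemma stair_getD_two (b : Bool) (bs : List Bool) (p : ℤ × ℤ) :
    (stair (b :: bs) p).getD 2 0 = p + dvec b + dvec b := by
  rw [show (2 : ℕ) = 0 + 2 from rfl, stair_getD_succ_succ, stair_getD_zero]

lemma stair_sum (bs : List Bool) (p : ℤ × ℤ) :
    ∀ i, i < (stair bs p).length →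
      ((stair bs p).getD i 0).1 + ((stair bs p).getD i 0).2 = p.1 + p.2 + i := by
  induction bs generalizing p with
  | nil =>
    intro i hi
    have : i = 0 := by rw [stair_length] at hi; simp at hi; omega
    subst this
    rw [stair_getD_zero]; simp
  | cons b bs ih =>
    intro i hi
    match i with
    | 0 => rw [stair_getD_zero]; simp
    | 1 =>
      rw [stair_getD_one]
      cases b <;> simp [dvec] <;> ring
    | (k + 2) =>
      rw [stair_getD_succ_succ]
      have hlen : k < (stair bs (p + dvec b + dvec b)).length := by
        rw [stair_length] at hi ⊢
        simp only [List.length_cons] at hi; omega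
      rw [ih (p + dvec b + dvec b) k hlen]
      cases b <;> simp [dvec] <;> push_cast <;> ring

lemma stair_nodup (bs : List Bool) (p : ℤ × ℤ) : (stair bs p).Nodup := by
  rw [List.nodup_iff_injective_get]
  rintro ⟨i, hi⟩ ⟨j, hj⟩ h
  have h1 := stair_sum bs p i hi
  have h2 := stair_sum bs p j hj
  rw [List.get_eq_getElem, ← List.getD_eq_getElem _ 0 hi] at h
  rw [List.get_eq_getElem, ← List.getD_eq_getElem _ 0 hj] at h
  rw [h, h2] at h1
  have : (i : ℤ) = (j : ℤ) := by omega
  exact Fin.ext (by exact_mod_cast this)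

lemma taxi_even_add_two {x : ℤ} (h : Even x) : Even (x + 1 + 1) := by
  rcases h with ⟨m, rfl⟩; exact ⟨m + 1, by ring⟩

lemma stair_step (bs : List Bool) (p : ℤ × ℤ) (h1 : Even p.1) (h2 : Even p.2) :
    ∀ i, i + 1 < (stair bs p).length →
      taxiStep ((stair bs p).getD i 0) ((stair bs p).getD (i + 1) 0) := by
  induction bs generalizing p with
  | nil => intro i hi; rw [stair_length] at hi; simp at hi
  | cons b bs ih =>
    intro i hi
    match i with
    | 0 =>
      rw [stair_getD_zero, show (0 + 1 : ℕ) = 1 from rfl, stair_getD_one]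
      cases b
      · exact Or.inl ⟨h2, by simp [dvec, Prod.ext_iff]⟩
      · exact Or.inr (Or.inr (Or.inl ⟨h1, by simp [dvec, Prod.ext_iff]⟩))
    | 1 =>
      rw [stair_getD_one, show (1 + 1 : ℕ) = 2 from rfl, stair_getD_two]
      cases b
      · exact Or.inl ⟨by simpa [dvec] using h2, by simp [dvec, Prod.ext_iff]⟩
      · exact Or.inr (Or.inr (Or.inl ⟨by simpa [dvec] using h1, by simp [dvec, Prod.ext_iff]⟩))
    | (k + 2) =>
      rw [stair_getD_succ_succ, show (k + 2 + 1 : ℕ) = (k + 1) + 2 from rfl,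
        stair_getD_succ_succ]
      have hp1 : Even (p + dvec b + dvec b).1 := by
        cases b <;> simp [dvec, Int.even_iff] at h1 ⊢ <;> omega
      have hp2 : Even (p + dvec b + dvec b).2 := by
        cases b <;> simp [dvec, Int.even_iff] at h2 ⊢ <;> omega
      apply ih _ hp1 hp2
      rw [stair_length] at hi ⊢
      simp only [List.length_cons] at hi; omega

lemma stair_pair (bs : List Bool) (p : ℤ × ℤ) :
    ∀ k, 2 * k + 2 < (stair bs p).length →
      ∃ b, (stair bs p).getD (2 * k + 1) 0 = (stair bs p).getD (2 * k) 0 + dvec b ∧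
        (stair bs p).getD (2 * k + 2) 0 = (stair bs p).getD (2 * k + 1) 0 + dvec b := by
  induction bs generalizing p with
  | nil => intro k hk; rw [stair_length] at hk; simp at hk
  | cons b bs ih =>
    intro k hk
    match k with
    | 0 =>
      refine ⟨b, ?_, ?_⟩
      · rw [show (2 * 0 + 1 : ℕ) = 1 from rfl, show (2 * 0 : ℕ) = 0 from rfl,
          stair_getD_one, stair_getD_zero]
      · rw [show (2 * 0 + 2 : ℕ) = 2 from rfl, show (2 * 0 + 1 : ℕ) = 1 from rfl,
          stair_getD_two, stair_getD_one]
    | (j + 1) =>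
      rw [show 2 * (j + 1) = 2 * j + 2 from by ring,
        show 2 * j + 2 + 1 = 2 * j + 1 + 2 from by omega]
      simp only [stair_getD_succ_succ]
      apply ih
      rw [stair_length] at hk ⊢
      simp only [List.length_cons] at hk; omega

lemma stair_no_turn_odd (bs : List Bool) (p : ℤ × ℤ) (k : ℕ)
    (hk : 2 * k + 2 < (stair bs p).length) : ¬ turnAt (stair bs p) (2 * k + 1) := by
  obtain ⟨b, hb1, hb2⟩ := stair_pair bs p k hk
  have d1 : (stair bs p).getD (2 * k + 1) 0 - (stair bs p).getD (2 * k) 0 = dvec b := by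
    rw [hb1]; ring
  have d2 : (stair bs p).getD (2 * k + 2) 0 - (stair bs p).getD (2 * k + 1) 0 = dvec b := by
    rw [hb2]; ring
  unfold turnAt
  rw [show 2 * k + 1 - 1 = 2 * k from by omega, show 2 * k + 1 + 1 = 2 * k + 2 from by omega,
    d1, d2]
  cases b <;> simp [perp, dvec]

lemma stair_mem (bs : List Bool) : stair bs 0 ∈ originWalks (2 * bs.length) := by
  refine ⟨⟨?_, stair_nodup bs 0, ?_, ?_⟩, ?_, stair_getD_zero bs 0⟩
  · intro h
    have := stair_length bs 0
    rw [h] at this; simp at this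
  · exact stair_step bs 0 (by simp) (by simp)
  · intro i hi1 hi2 ⟨t1, t2⟩
    rcases Nat.even_or_odd i with ⟨m, hm⟩ | ⟨m, hm⟩
    · have hm' : i + 1 = 2 * m + 1 := by omega
      exact stair_no_turn_odd bs 0 m (by omega) (hm' ▸ t2)
    · have hm' : i = 2 * m + 1 := by omega
      exact stair_no_turn_odd bs 0 m (by omega) (hm' ▸ t1)
  · rw [stair_length]

lemma stair_inj (p : ℤ × ℤ) : ∀ bs1 bs2 : List Bool, stair bs1 p = stair bs2 p → bs1 = bs2 := by
  intro bs1
  induction bs1 generalizing p with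
  | nil =>
    intro bs2 h
    cases bs2 with
    | nil => rfl
    | cons c cs =>
      have := congrArg List.length h
      rw [stair_length, stair_length] at this
      simp at this
  | cons b bs ih =>
    intro bs2 h
    cases bs2 with
    | nil =>
      have := congrArg List.length h
      rw [stair_length, stair_length] at this
      simp at this
    | cons c cs =>
      simp only [stair, List.cons.injEq] at h
      obtain ⟨-, h2, h3⟩ := h
      have hb : b = c := by
        cases b <;> cases c <;> simp_all [dvec, Prod.ext_iff]
      subst hb
      rw [ih _ _ h3]

lemma pow_le_taxiCount (n : ℕ) : 2 ^ n ≤ taxiCount (2 * n) := by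
  classical
  have hinj : Function.Injective (fun v : Fin n → Bool => stair (List.ofFn v) 0) := by
    intro v1 v2 h
    exact List.ofFn_injective (stair_inj 0 _ _ h)
  have hsub : (fun v : Fin n → Bool => stair (List.ofFn v) 0) '' Set.univ ⊆
      originWalks (2 * n) := by
    rintro _ ⟨v, -, rfl⟩
    simpa using stair_mem (List.ofFn v)
  calc 2 ^ n = ((fun v : Fin n → Bool => stair (List.ofFn v) 0) '' Set.univ).ncard := by
        rw [Set.ncard_image_of_injective _ hinj, Set.ncard_univ]
        simp [Nat.card_eq_fintype_card]
    _ ≤ taxiCount (2 * n) := Set.ncard_le_ncard hsub (originWalks_finite _)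

noncomputable def phi : ℝ := (1 + Real.sqrt 5) / 2

lemma sqrt5_sq : Real.sqrt 5 ^ 2 = 5 := Real.sq_sqrt (by norm_num)
lemma sqrt5_nonneg : 0 ≤ Real.sqrt 5 := Real.sqrt_nonneg 5
lemma phi_pos : 0 < phi := by unfold phi; positivity
lemma one_le_phi : 1 ≤ phi := by
  unfold phi
  nlinarith [sqrt5_sq, sqrt5_nonneg]
lemma phi_sq : phi ^ 2 = phi + 1 := by
  unfold phi
  nlinarith [sqrt5_sq]

lemma fib_le_phi_pow : ∀ n, (Nat.fib (n + 1) : ℝ) ≤ phi ^ n := by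
  intro n
  induction n using Nat.strong_induction_on with
  | _ n ih =>
    match n with
    | 0 => simp
    | 1 => simpa using one_le_phi
    | (k + 2) =>
      have h1 := ih k (by omega)
      have h2 := ih (k + 1) (by omega)
      have : (Nat.fib (k + 3) : ℝ) = Nat.fib (k + 1) + Nat.fib (k + 2) := by
        rw [Nat.fib_add_two]; push_cast; ring
      rw [this]
      calc (Nat.fib (k + 1) : ℝ) + Nat.fib (k + 2) ≤ phi ^ k + phi ^ (k + 1) :=
            add_le_add h1 h2
        _ = phi ^ k * (1 + phi) := by ring
        _ = phi ^ k * phi ^ 2 := by rw [phi_sq]; ring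
        _ = phi ^ (k + 2) := by ring


end TaxiAux

/-- The taxi walk connective constant `μ_taxi = lim_{n→∞} c_n^{1/n}`
satisfies `√2 ≤ μ_taxi ≤ (1 + √5)/2`. -/
theorem muTaxi_trivial_bounds (μ : ℝ)
    (hμ : Filter.Tendsto (fun n : ℕ => (taxiCount n : ℝ) ^ ((1 : ℝ) / (n : ℝ)))
      Filter.atTop (nhds μ)) :
    Real.sqrt 2 ≤ μ ∧ μ ≤ (1 + Real.sqrt 5) / 2 := by
  constructor
  · -- lower bound
    have h2n : Tendsto (fun n : ℕ => 2 * n) atTop atTop :=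
      tendsto_atTop_mono (fun n => by simp; omega) tendsto_id
    have hcomp := hμ.comp h2n
    refine ge_of_tendsto hcomp ?_
    rw [eventually_atTop]
    refine ⟨1, fun n hn => ?_⟩
    have hn0 : ((n : ℝ)) ≠ 0 := by
      have : (1 : ℝ) ≤ (n : ℝ) := by exact_mod_cast hn
      linarith
    have hc : (2 : ℝ) ^ (n : ℕ) ≤ (taxiCount (2 * n) : ℝ) := by
      exact_mod_cast pow_le_taxiCount n
    have hne : ((2 * n : ℕ) : ℝ) = 2 * (n : ℝ) := by push_cast; ring
    have hepos : (0 : ℝ) ≤ 1 / ((2 * n : ℕ) : ℝ) := by positivity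
    have key : ((2 : ℝ) ^ (n : ℕ)) ^ ((1 : ℝ) / ((2 * n : ℕ) : ℝ)) ≤
        (taxiCount (2 * n) : ℝ) ^ ((1 : ℝ) / ((2 * n : ℕ) : ℝ)) :=
      Real.rpow_le_rpow (by positivity) hc hepos
    have heval : ((2 : ℝ) ^ (n : ℕ)) ^ ((1 : ℝ) / ((2 * n : ℕ) : ℝ)) = Real.sqrt 2 := by
      rw [← Real.rpow_natCast 2 n, ← Real.rpow_mul (by norm_num), hne]
      rw [show (n : ℝ) * (1 / (2 * (n : ℝ))) = 1 / 2 by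
        field_simp]
      rw [Real.sqrt_eq_rpow]
    calc Real.sqrt 2 = _ := heval.symm
      _ ≤ _ := key
  · -- upper bound
    have hlim1 : Tendsto (fun n : ℕ => (2 * phi) ^ ((1 : ℝ) / (n : ℝ))) atTop (nhds 1) := by
      have hpos : (0 : ℝ) < 2 * phi := by have := phi_pos; linarith
      have hx : Tendsto (fun n : ℕ => Real.log (2 * phi) * ((1 : ℝ) / (n : ℝ))) atTop
          (nhds 0) := by
        simpa using tendsto_one_div_atTop_nhds_zero_nat.const_mul (Real.log (2 * phi))
      have := (Real.continuous_exp.tendsto 0).comp hx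
      simp only [Real.exp_zero] at this
      refine this.congr fun n => ?_
      simp only [Function.comp_apply]
      rw [← Real.rpow_def_of_pos hpos]
    have hlim : Tendsto (fun n : ℕ => (2 * phi) ^ ((1 : ℝ) / (n : ℝ)) * phi) atTop
        (nhds phi) := by
      have := hlim1.mul_const phi
      simpa using this
    have hbound : ∀ᶠ n : ℕ in atTop, (taxiCount n : ℝ) ^ ((1 : ℝ) / (n : ℝ)) ≤
        (2 * phi) ^ ((1 : ℝ) / (n : ℝ)) * phi := by
      rw [eventually_atTop]
      refine ⟨1, fun n hn => ?_⟩
      have hnR : (1 : ℝ) ≤ (n : ℝ) := by exact_mod_cast hn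
      have hc1 : (taxiCount n : ℝ) ≤ 2 * Nat.fib (n + 2) := by
        exact_mod_cast taxiCount_le n hn
      have hc2 : (Nat.fib (n + 2) : ℝ) ≤ phi ^ (n + 1) := fib_le_phi_pow (n + 1)
      have hc : (taxiCount n : ℝ) ≤ (2 * phi) * phi ^ n := by
        calc (taxiCount n : ℝ) ≤ 2 * Nat.fib (n + 2) := hc1
          _ ≤ 2 * phi ^ (n + 1) := by linarith
          _ = (2 * phi) * phi ^ n := by ring
      have hepos : (0 : ℝ) ≤ 1 / (n : ℝ) := by positivity
      calc (taxiCount n : ℝ) ^ ((1 : ℝ) / (n : ℝ))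
          ≤ ((2 * phi) * phi ^ n) ^ ((1 : ℝ) / (n : ℝ)) :=
            Real.rpow_le_rpow (by positivity) hc hepos
        _ = (2 * phi) ^ ((1 : ℝ) / (n : ℝ)) * (phi ^ n) ^ ((1 : ℝ) / (n : ℝ)) :=
            Real.mul_rpow (by have := phi_pos; positivity) (by have := phi_pos; positivity)
        _ = (2 * phi) ^ ((1 : ℝ) / (n : ℝ)) * phi := by
            rw [← Real.rpow_natCast phi n, ← Real.rpow_mul phi_pos.le]
            rw [show (n : ℝ) * (1 / (n : ℝ)) = 1 by
              have hn0 : ((n : ℝ)) ≠ 0 := by linarith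
              field_simp]
            rw [Real.rpow_one]
    have := le_of_tendsto_of_tendsto hμ hlim hbound
    simpa [phi] using this
end
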